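/- Let n ≥ 1 and d ≥ 3 be integers, and let M, M' ∈ Sym_n(ℤ_2) be nonsingular. Suppose that the matrix 2^d M⁻¹ (inverse taken over ℚ_2) has all entries in ℤ_2 and lies in GL_n(ℤ_2), and that every entry of M⁻¹ − (M')⁻¹ lies in ℤ_2. Then M and M' are congruent under GL_n(ℤ_2). -/

import Mathlib

open Matrix MeasureTheory

/-- Congruence of square matrices over `R`: `B = U * A * Uᵀ` for some `U ∈ GL`. -/
def Matrix.Congruent {R : Type*} [CommRing R] {ι : Type*} [Fintype ι] [DecidableEq ι]
    (A B : Matrix ι ι R) : Prop :=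
  ∃ U : (Matrix ι ι R)ˣ, (U : Matrix ι ι R) * A * (U : Matrix ι ι R)ᵀ = B

/-- Congruence of square matrices indexed by two (necessarily equipotent) index types. -/
def Matrix.CongruentTo {R : Type*} [CommRing R] {ι κ : Type*} [Fintype ι] [DecidableEq ι]
    [Fintype κ] [DecidableEq κ] (A : Matrix ι ι R) (B : Matrix κ κ R) : Prop :=
  ∃ e : ι ≃ κ, (A.submatrix e.symm e.symm).Congruent B

namespace Stmt9Aux

lemma dvd_iff_norm_le {x : ℤ_[2]} {m : ℕ} : (2:ℤ_[2])^m ∣ x ↔ ‖x‖ ≤ (2:ℝ)^(-(m:ℤ)) := by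
  have h := (PadicInt.norm_le_pow_iff_mem_span_pow x m).symm
  rw [Ideal.mem_span_singleton] at h
  have e1 : (((2:ℕ):ℤ_[2]))^m = (2:ℤ_[2])^m := by norm_num
  have e2 : (((2:ℕ):ℝ)) = (2:ℝ) := by norm_num
  rw [e1, e2] at h
  exact h

lemma norm_two_pow_mul (m : ℕ) (x : ℤ_[2]) : ‖(2:ℤ_[2])^m * x‖ ≤ (2:ℝ)^(-(m:ℤ)) :=
  dvd_iff_norm_le.mp (Dvd.intro x rfl)

lemma isUnit_det_congr {n : ℕ} (X Y : Matrix (Fin n) (Fin n) ℤ_[2])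
    (h : ∀ i j, (2:ℤ_[2]) ∣ (X - Y) i j) (hY : IsUnit Y.det) : IsUnit X.det := by
  have hmap : (PadicInt.toZMod (p := 2)).mapMatrix X = (PadicInt.toZMod (p := 2)).mapMatrix Y := by
    ext i j
    have h0 : PadicInt.toZMod ((X - Y) i j) = 0 := by
      have : (X - Y) i j ∈ RingHom.ker (PadicInt.toZMod (p := 2)) := by
        rw [PadicInt.ker_toZMod, PadicInt.maximalIdeal_eq_span_p, Ideal.mem_span_singleton]
        exact_mod_cast h i j
      simpa [RingHom.mem_ker] using this
    have : PadicInt.toZMod (X i j) - PadicInt.toZMod (Y i j) = 0 := by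
      rw [← map_sub]; simpa using h0
    have := sub_eq_zero.mp this
    simpa [RingHom.mapMatrix_apply, Matrix.map_apply] using this
  have hdet : PadicInt.toZMod X.det = PadicInt.toZMod Y.det := by
    rw [RingHom.map_det, RingHom.map_det, hmap]
  have hY0 : PadicInt.toZMod Y.det ≠ 0 := (hY.map (PadicInt.toZMod (p := 2))).ne_zero
  rw [PadicInt.isUnit_iff]
  by_contra hx
  have hlt : ‖X.det‖ < 1 := lt_of_le_of_ne (PadicInt.norm_le_one _) hx
  have hdvd : (2:ℤ_[2]) ∣ X.det := by exact_mod_cast (PadicInt.norm_lt_one_iff_dvd _).mp hlt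
  have h0 : PadicInt.toZMod X.det = 0 := by
    have : X.det ∈ RingHom.ker (PadicInt.toZMod (p := 2)) := by
      rw [PadicInt.ker_toZMod, PadicInt.maximalIdeal_eq_span_p, Ideal.mem_span_singleton]
      exact_mod_cast hdvd
    simpa [RingHom.mem_ker] using this
  rw [hdet] at h0; exact hY0 h0

/-- Invariant of the Hensel-type iteration. -/
def Inv {n : ℕ} (C C' : Matrix (Fin n) (Fin n) ℤ_[2]) (m : ℕ)
    (U T : Matrix (Fin n) (Fin n) ℤ_[2]) : Prop :=
  U * C * Uᵀ + (2:ℤ_[2])^m • T = C' ∧ T.IsSymm ∧ ∀ i j, (2:ℤ_[2]) ∣ (U - 1) i j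

lemma step {n : ℕ} (C C' : Matrix (Fin n) (Fin n) ℤ_[2]) (hCs : C.IsSymm)
    (hCu : IsUnit C.det) (m : ℕ) (hm : 3 ≤ m) (U T : Matrix (Fin n) (Fin n) ℤ_[2])
    (h : Inv C C' m U T) :
    ∃ U' T', Inv C C' (m+1) U' T' ∧
      ∀ i j, ‖(U' - U) i j‖ ≤ (2:ℝ)^(-((m:ℤ)-1)) := by
  obtain ⟨heq, hTs, hU1⟩ := h
  set S : Matrix (Fin n) (Fin n) ℤ_[2] := U * C * Uᵀ with hSdef
  have hSs : Sᵀ = S := by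
    rw [hSdef, transpose_mul, transpose_mul, transpose_transpose, hCs.eq, mul_assoc]
  have hUdet : IsUnit U.det := isUnit_det_congr U 1 hU1 (by simp)
  have hSu : IsUnit S.det := by
    rw [hSdef, det_mul, det_mul, det_transpose]
    exact (hUdet.mul hCu).mul hUdet
  set Y : Matrix (Fin n) (Fin n) ℤ_[2] := T * S⁻¹ with hYdef
  have hYS : Y * S = T := by
    rw [hYdef, mul_assoc, nonsing_inv_mul S hSu, mul_one]
  have hYt : Yᵀ = S⁻¹ * T := by
    rw [hYdef, transpose_mul, transpose_nonsing_inv, hSs, hTs.eq]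
  have hSYt : S * Yᵀ = T := by
    rw [hYt, ← mul_assoc, mul_nonsing_inv S hSu, one_mul]
  set W : Matrix (Fin n) (Fin n) ℤ_[2] := T * (S⁻¹ * T) with hWdef
  have hWs : Wᵀ = W := by
    rw [hWdef, transpose_mul, transpose_mul, transpose_nonsing_inv, hSs, hTs.eq, mul_assoc]
  set a : ℤ_[2] := (2:ℤ_[2])^(m-1) with hadef
  set V : Matrix (Fin n) (Fin n) ℤ_[2] := 1 + a • Y with hVdef
  have hm1 : m - 1 + 1 = m := by omega
  have hm2 : (m - 1) + (m - 1) = (m + 1) + (m - 3) := by omega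
  refine ⟨V * U, -((2:ℤ_[2])^(m-3) • W), ⟨?_, ?_, ?_⟩, ?_⟩
  · -- main equation
    have hVS : V * S * Vᵀ = S + (2:ℤ_[2])^m • T + (2:ℤ_[2])^(m+1) • ((2:ℤ_[2])^(m-3) • W) := by
      have expand : V * S * Vᵀ = S + a • (Y * S) + a • (S * Yᵀ) + (a*a) • (Y * (S * Yᵀ)) := by
        rw [hVdef, transpose_add, transpose_one, transpose_smul]
        simp only [add_mul, mul_add, one_mul, mul_one, Matrix.smul_mul, Matrix.mul_smul,
          smul_smul, mul_assoc]
        abel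
      have hYSYt : Y * (S * Yᵀ) = W := by rw [hSYt, hYdef, hWdef, mul_assoc]
      rw [expand, hYSYt, hYS, hSYt]
      have h2a : a • T + a • T = (2:ℤ_[2])^m • T := by
        rw [← add_smul, hadef, ← two_mul, ← pow_succ', hm1]
      have haa : a * a = (2:ℤ_[2])^(m+1) * (2:ℤ_[2])^(m-3) := by
        rw [hadef, ← pow_add, ← pow_add, hm2]
      rw [add_assoc S, h2a, smul_smul, ← haa]
    have hU'CU' : (V * U) * C * (V * U)ᵀ = V * S * Vᵀ := by
      rw [transpose_mul, hSdef]
      simp only [mul_assoc]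
    rw [hU'CU', hVS, smul_neg]
    rw [← heq]
    abel
  · -- symmetry of new T
    show (-((2:ℤ_[2])^(m-3) • W))ᵀ = _
    rw [transpose_neg, transpose_smul, hWs]
  · -- congruent to 1 mod 2
    intro i j
    have hVU : V * U = U + a • (Y * U) := by
      rw [hVdef, add_mul, one_mul, Matrix.smul_mul]
    have : V * U - 1 = (U - 1) + a • (Y * U) := by rw [hVU]; abel
    rw [this]
    have h2a : (2:ℤ_[2]) ∣ a := by
      rw [hadef]
      exact dvd_pow_self 2 (by omega)
    exact dvd_add (hU1 i j) (Dvd.dvd.mul_right h2a _)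
  · -- norm bound
    intro i j
    have hVU : V * U - U = a • (Y * U) := by
      rw [hVdef, add_mul, one_mul, Matrix.smul_mul]; abel
    rw [hVU]
    have : (a • (Y * U)) i j = (2:ℤ_[2])^(m-1) * (Y * U) i j := rfl
    rw [this]
    have := norm_two_pow_mul (m-1) ((Y * U) i j)
    have hcast : -(((m-1:ℕ)):ℤ) = -((m:ℤ)-1) := by push_cast [hm1]; omega
    rwa [hcast] at this

lemma key {n : ℕ} (e : ℕ) (he : 3 ≤ e) (C C' B : Matrix (Fin n) (Fin n) ℤ_[2])
    (hCs : C.IsSymm) (hCu : IsUnit C.det) (hBs : B.IsSymm)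
    (hB : C' = C + (2:ℤ_[2])^e • B) :
    ∃ U : Matrix (Fin n) (Fin n) ℤ_[2], IsUnit U.det ∧ U * C * Uᵀ = C' := by
  classical
  have inv0 : Inv C C' e 1 B := by
    refine ⟨by simpa using hB.symm, hBs, fun i j => by simp⟩
  -- the recursive sequence
  let step' : ∀ k (q : {p : Matrix (Fin n) (Fin n) ℤ_[2] × Matrix (Fin n) (Fin n) ℤ_[2] //
      Inv C C' (e+k) p.1 p.2}),
      {p : Matrix (Fin n) (Fin n) ℤ_[2] × Matrix (Fin n) (Fin n) ℤ_[2] //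
        Inv C C' (e+(k+1)) p.1 p.2 ∧
        ∀ i j, ‖(p.1 - q.1.1) i j‖ ≤ (2:ℝ)^(-(((e:ℤ)+k)-1))} := by
    intro k q
    have hs := step C C' hCs hCu (e+k) (by omega) q.1.1 q.1.2 q.2
    refine ⟨⟨hs.choose, hs.choose_spec.choose⟩, hs.choose_spec.choose_spec.1, ?_⟩
    have := hs.choose_spec.choose_spec.2
    intro i j
    have h2 := this i j
    have : ((e:ℤ) + k) = ((e+k : ℕ) : ℤ) := by push_cast; ring
    rw [this]
    exact h2
  let seq : ∀ k : ℕ, {p : Matrix (Fin n) (Fin n) ℤ_[2] × Matrix (Fin n) (Fin n) ℤ_[2] //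
      Inv C C' (e+k) p.1 p.2} :=
    fun k => Nat.rec ⟨(1, B), inv0⟩ (fun k ih => ⟨(step' k ih).1, (step' k ih).2.1⟩) k
  let u : ℕ → Matrix (Fin n) (Fin n) ℤ_[2] := fun k => (seq k).1.1
  let t : ℕ → Matrix (Fin n) (Fin n) ℤ_[2] := fun k => (seq k).1.2
  have hinv : ∀ k, Inv C C' (e+k) (u k) (t k) := fun k => (seq k).2
  have hclose : ∀ k i j, ‖(u (k+1) - u k) i j‖ ≤ (2:ℝ)^(-(((e:ℤ)+k)-1)) := by
    intro k
    exact (step' k (seq k)).2.2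
  -- geometric bound
  have hgeo : ∀ k i j, dist (u k i j) (u (k+1) i j) ≤ (4⁻¹:ℝ) * (2⁻¹:ℝ)^k := by
    intro k i j
    rw [dist_eq_norm, ← norm_neg]
    have hn : -(u k i j - u (k+1) i j) = (u (k+1) - u k) i j := by
      simp [Matrix.sub_apply]
    rw [hn]
    refine le_trans (hclose k i j) ?_
    have h1 : (-(((e:ℤ)+k)-1)) ≤ (-((k:ℤ)+2)) := by omega
    calc (2:ℝ)^(-(((e:ℤ)+k)-1)) ≤ (2:ℝ)^(-((k:ℤ)+2)) := by
          exact zpow_le_zpow_right₀ one_le_two h1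
      _ = (4⁻¹:ℝ) * (2⁻¹:ℝ)^k := by
          rw [show -((k:ℤ)+2) = (-2) + (-(k:ℤ)) by ring,
            zpow_add₀ (by norm_num : (2:ℝ) ≠ 0), _root_.zpow_neg, _root_.zpow_neg,
            zpow_natCast, ← inv_pow]
          norm_num
  have hcauchy : ∀ i j, CauchySeq (fun k => u k i j) :=
    fun i j => cauchySeq_of_le_geometric (2⁻¹:ℝ) (4⁻¹:ℝ) (by norm_num)
      (fun k => hgeo k i j)
  have hconv : ∀ i j, ∃ a : ℤ_[2], Filter.Tendsto (fun k => u k i j) Filter.atTop (nhds a) :=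
    fun i j => cauchySeq_tendsto_of_complete (hcauchy i j)
  choose L hL using hconv
  set U : Matrix (Fin n) (Fin n) ℤ_[2] := Matrix.of L with hUdef
  have hUij : ∀ i j, Filter.Tendsto (fun k => u k i j) Filter.atTop (nhds (U i j)) := hL
  -- the limit satisfies the equation
  have hmain : U * C * Uᵀ = C' := by
    ext i j
    have htend1 : Filter.Tendsto (fun k => (u k * C * (u k)ᵀ) i j) Filter.atTop
        (nhds ((U * C * Uᵀ) i j)) := by
      simp only [Matrix.mul_apply, Matrix.transpose_apply]
      apply tendsto_finset_sum
      intro b _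
      apply Filter.Tendsto.mul
      · apply tendsto_finset_sum
        intro c _
        exact (hUij i c).mul tendsto_const_nhds
      · exact hUij j b
    have htend2 : Filter.Tendsto (fun k => (u k * C * (u k)ᵀ) i j) Filter.atTop
        (nhds (C' i j)) := by
      have heq : ∀ k, (u k * C * (u k)ᵀ) i j = C' i j - (2:ℤ_[2])^(e+k) * (t k) i j := by
        intro k
        have := (hinv k).1
        have h1 : (u k * C * (u k)ᵀ) i j + ((2:ℤ_[2])^(e+k) • (t k)) i j = C' i j := by
          rw [← Matrix.add_apply, this]
        have h2 : ((2:ℤ_[2])^(e+k) • (t k)) i j = (2:ℤ_[2])^(e+k) * (t k) i j := rfl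
        rw [h2] at h1
        linear_combination h1
      simp only [heq]
      have : Filter.Tendsto (fun k => (2:ℤ_[2])^(e+k) * (t k) i j) Filter.atTop (nhds 0) := by
        apply squeeze_zero_norm (a := fun k => (2⁻¹:ℝ)^k)
        · intro k
          have := norm_two_pow_mul (e+k) ((t k) i j)
          refine le_trans this ?_
          have h1 : (-(((e+k:ℕ)):ℤ)) ≤ (-(k:ℤ)) := by push_cast; omega
          calc (2:ℝ)^(-(((e+k:ℕ)):ℤ)) ≤ (2:ℝ)^(-(k:ℤ)) := zpow_le_zpow_right₀ one_le_two h1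
            _ = (2⁻¹:ℝ)^k := by
                rw [_root_.zpow_neg, zpow_natCast, ← inv_pow]
        · exact tendsto_pow_atTop_nhds_zero_of_lt_one (by norm_num) (by norm_num)
      simpa using (tendsto_const_nhds (x := C' i j)).sub this
    exact tendsto_nhds_unique htend1 htend2
  -- the limit is congruent to 1 mod 2
  have hU1 : ∀ i j, (2:ℤ_[2]) ∣ (U - 1) i j := by
    intro i j
    have hk : ∀ k, ‖(u k - 1) i j‖ ≤ (2:ℝ)^(-(1:ℤ)) := by
      intro k
      have := (hinv k).2.2 i j
      have h2 : (2:ℤ_[2])^1 ∣ (u k - 1) i j := by simpa using this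
      exact dvd_iff_norm_le.mp h2
    have htend : Filter.Tendsto (fun k => ‖(u k - 1) i j‖) Filter.atTop
        (nhds ‖(U - 1) i j‖) := by
      have : Filter.Tendsto (fun k => (u k - 1) i j) Filter.atTop (nhds ((U - 1) i j)) := by
        simp only [Matrix.sub_apply]
        exact (hUij i j).sub tendsto_const_nhds
      exact this.norm
    have hle : ‖(U - 1) i j‖ ≤ (2:ℝ)^(-(1:ℤ)) :=
      le_of_tendsto htend (Filter.Eventually.of_forall hk)
    have := dvd_iff_norm_le.mpr hle
    simpa using this
  exact ⟨U, isUnit_det_congr U 1 hU1 (by simp), hmain⟩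

lemma smul_cancel {n d : ℕ} {X Y : Matrix (Fin n) (Fin n) ℤ_[2]}
    (h : (2:ℤ_[2])^d • X = (2:ℤ_[2])^d • Y) : X = Y := by
  ext i j
  have h1 : (2:ℤ_[2])^d * X i j = (2:ℤ_[2])^d * Y i j := by
    have := congrFun (congrFun h i) j
    simpa [Matrix.smul_apply] using this
  exact mul_left_cancel₀ (pow_ne_zero d (by norm_num)) h1

end Stmt9Aux

open Stmt9Aux in
/-- Let `n ≥ 1`, `d ≥ 3`, and let `M, M' ∈ Sym_n(ℤ_2)` be nonsingular. If
`2^d M⁻¹` (inverse over `ℚ_2`) has all entries in `ℤ_2` and lies in `GL_n(ℤ_2)`, and every entry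
of `M⁻¹ - (M')⁻¹` lies in `ℤ_2`, then `M` and `M'` are congruent under `GL_n(ℤ_2)`. -/
theorem stmt_9 {n d : ℕ} (hn : 1 ≤ n) (hd3 : 3 ≤ d)
    (M M' : Matrix (Fin n) (Fin n) ℤ_[2]) (hMs : M.IsSymm) (hM's : M'.IsSymm)
    (hMd : M.det ≠ 0) (hM'd : M'.det ≠ 0)
    (h1 : ∃ N : Matrix (Fin n) (Fin n) ℤ_[2],
      N.map (fun a => (a : ℚ_[2])) = (2 : ℚ_[2]) ^ d • (M.map (fun a => (a : ℚ_[2])))⁻¹ ∧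
      IsUnit N.det)
    (h2 : ∀ i j, ‖((M.map (fun a => (a : ℚ_[2])))⁻¹ - (M'.map (fun a => (a : ℚ_[2])))⁻¹) i j‖ ≤ 1) :
    M.Congruent M' := by
  obtain ⟨N, hN, hNu⟩ := h1
  set φ : ℤ_[2] →+* ℚ_[2] := PadicInt.Coe.ringHom with hφ
  have hφinj : Function.Injective φ := Subtype.coe_injective
  have hφtwo : φ (2:ℤ_[2]) = (2:ℚ_[2]) := by
    have h : ((2:ℤ_[2]):ℚ_[2]) = (2:ℚ_[2]) := by norm_cast
    exact h
  have hφ2 : φ ((2:ℤ_[2])^d) = (2:ℚ_[2])^d := by rw [map_pow, hφtwo]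
  set Mq : Matrix (Fin n) (Fin n) ℚ_[2] := M.map (fun a => (a : ℚ_[2])) with hMqdef
  set M'q : Matrix (Fin n) (Fin n) ℚ_[2] := M'.map (fun a => (a : ℚ_[2])) with hM'qdef
  have hMqm : Mq = φ.mapMatrix M := rfl
  have hM'qm : M'q = φ.mapMatrix M' := rfl
  have hminj : ∀ X Y : Matrix (Fin n) (Fin n) ℤ_[2], φ.mapMatrix X = φ.mapMatrix Y → X = Y := by
    intro X Y h
    ext i j
    have hij : (φ.mapMatrix X) i j = (φ.mapMatrix Y) i j := by rw [h]
    simp only [RingHom.mapMatrix_apply, Matrix.map_apply] at hij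
    exact hφinj hij
  have hsm : ∀ (c : ℤ_[2]) (X : Matrix (Fin n) (Fin n) ℤ_[2]),
      φ.mapMatrix (c • X) = (φ c) • (φ.mapMatrix X) := by
    intro c X
    ext i j
    simp [RingHom.mapMatrix_apply, Matrix.map_apply, Matrix.smul_apply]
  have hMqdet : Mq.det ≠ 0 := by
    rw [hMqm, ← RingHom.map_det]
    intro h
    exact hMd (hφinj (by simpa using h))
  have hM'qdet : M'q.det ≠ 0 := by
    rw [hM'qm, ← RingHom.map_det]
    intro h
    exact hM'd (hφinj (by simpa using h))
  have hNq : φ.mapMatrix N = (2:ℚ_[2])^d • Mq⁻¹ := hN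
  -- M * N = 2^d • 1 and N * M = 2^d • 1
  have hMN : M * N = (2:ℤ_[2])^d • 1 := by
    apply hminj
    rw [_root_.map_mul, hNq, ← hMqm, Matrix.mul_smul, mul_nonsing_inv Mq (isUnit_iff_ne_zero.mpr hMqdet),
      hsm, _root_.map_one, hφ2]
  have hNM : N * M = (2:ℤ_[2])^d • 1 := by
    apply hminj
    rw [_root_.map_mul, hNq, ← hMqm, Matrix.smul_mul, nonsing_inv_mul Mq (isUnit_iff_ne_zero.mpr hMqdet),
      hsm, _root_.map_one, hφ2]
  -- the integral matrix A with A.map coe = Mq⁻¹ - M'q⁻¹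
  set A : Matrix (Fin n) (Fin n) ℤ_[2] :=
    Matrix.of (fun i j => (⟨(Mq⁻¹ - M'q⁻¹) i j, h2 i j⟩ : ℤ_[2])) with hAdef
  have hA : φ.mapMatrix A = Mq⁻¹ - M'q⁻¹ := rfl
  set N' : Matrix (Fin n) (Fin n) ℤ_[2] := N - (2:ℤ_[2])^d • A with hN'def
  have hN'q : φ.mapMatrix N' = (2:ℚ_[2])^d • M'q⁻¹ := by
    rw [hN'def, map_sub, hNq, hsm, hA, hφ2, smul_sub]
    abel
  have hM'N' : M' * N' = (2:ℤ_[2])^d • 1 := by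
    apply hminj
    rw [_root_.map_mul, hN'q, ← hM'qm, Matrix.mul_smul,
      mul_nonsing_inv M'q (isUnit_iff_ne_zero.mpr hM'qdet), hsm, _root_.map_one, hφ2]
  have hN'M' : N' * M' = (2:ℤ_[2])^d • 1 := by
    apply hminj
    rw [_root_.map_mul, hN'q, ← hM'qm, Matrix.smul_mul,
      nonsing_inv_mul M'q (isUnit_iff_ne_zero.mpr hM'qdet), hsm, _root_.map_one, hφ2]
  -- N' is unimodular
  have hN'u : IsUnit N'.det := by
    apply isUnit_det_congr N' N _ hNu
    intro i j
    have : (N' - N) i j = -((2:ℤ_[2])^d * A i j) := by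
      rw [hN'def]
      simp [Matrix.sub_apply, Matrix.smul_apply]
    rw [this]
    exact dvd_neg.mpr (Dvd.dvd.mul_right (dvd_pow_self 2 (by omega)) _)
  -- C and C'
  set C : Matrix (Fin n) (Fin n) ℤ_[2] := N⁻¹ with hCdef
  set C' : Matrix (Fin n) (Fin n) ℤ_[2] := N'⁻¹ with hC'def
  have hMC : M = (2:ℤ_[2])^d • C := by
    calc M = M * (N * N⁻¹) := by rw [mul_nonsing_inv N hNu, mul_one]
      _ = (M * N) * N⁻¹ := by rw [mul_assoc]
      _ = (2:ℤ_[2])^d • C := by rw [hMN, Matrix.smul_mul, one_mul, hCdef]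
  have hM'C' : M' = (2:ℤ_[2])^d • C' := by
    calc M' = M' * (N' * N'⁻¹) := by rw [mul_nonsing_inv N' hN'u, mul_one]
      _ = (M' * N') * N'⁻¹ := by rw [mul_assoc]
      _ = (2:ℤ_[2])^d • C' := by rw [hM'N', Matrix.smul_mul, one_mul, hC'def]
  have hCu : IsUnit C.det := by
    apply IsUnit.of_mul_eq_one N.det
    rw [hCdef, ← det_mul, nonsing_inv_mul N hNu, det_one]
  have hCs : C.IsSymm := by
    rw [Matrix.IsSymm]
    apply smul_cancel (d := d)
    rw [← transpose_smul, ← hMC, hMs.eq, hMC]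
  have hC's : C'.IsSymm := by
    rw [Matrix.IsSymm]
    apply smul_cancel (d := d)
    rw [← transpose_smul, ← hM'C', hM's.eq, hM'C']
  -- C' = C + 2^d • B
  set B : Matrix (Fin n) (Fin n) ℤ_[2] := N'⁻¹ * A * N⁻¹ with hBdef
  have hdiff : C' - C = (2:ℤ_[2])^d • B := by
    have hNN' : N - N' = (2:ℤ_[2])^d • A := by rw [hN'def]; abel
    have h3 : N'⁻¹ * (N - N') * N⁻¹ = C' - C := by
      rw [mul_sub, sub_mul, mul_assoc, mul_nonsing_inv N hNu, mul_one,
        nonsing_inv_mul N' hN'u, one_mul]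
    rw [← h3, hNN', Matrix.mul_smul, Matrix.smul_mul, hBdef]
  have hC'eq : C' = C + (2:ℤ_[2])^d • B := by rw [← hdiff]; abel
  have hBs : B.IsSymm := by
    rw [Matrix.IsSymm]
    apply smul_cancel (d := d)
    rw [← transpose_smul, ← hdiff, transpose_sub, hC's.eq, hCs.eq, hdiff]
  -- apply the key lemma
  obtain ⟨U, hUdet, hUC⟩ := key d hd3 C C' B hCs hCu hBs hC'eq
  have hfinal : U * M * Uᵀ = M' := by
    rw [hMC, hM'C', Matrix.mul_smul, Matrix.smul_mul, hUC]
  obtain ⟨u, hu⟩ := (isUnit_iff_isUnit_det U).mpr hUdet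
  exact ⟨u, by rw [hu]; exact hfinal⟩
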